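/- Let Ω be a Cantor group, T : Ω → Ω a minimal translation, and f ∈ C(Ω,ℝ). For each ω ∈ Ω define V_ω ∈ ℓ^∞(ℤ) by V_ω(n) = f(Tⁿω). Then for every ω ∈ Ω the sequence V_ω is limit-periodic, i.e., it lies in the closure (with respect to the supremum norm on bounded two-sided real sequences) of the set of periodic sequences, and the closure of the shift orbit {S^k V_ω : k ∈ ℤ} in ℓ^∞(ℤ) equals {V_{ω̃} : ω̃ ∈ Ω}, where S is the shift (SV)(n) = V(n+1). -/

import Mathlib

open ENNReal

/-- Uniform continuity of a continuous function on a compact topological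
additive group, phrased via a neighborhood of `0`. -/
lemma statement18_aux_uc {Ω : Type*} [TopologicalSpace Ω] [AddCommGroup Ω]
    [IsTopologicalAddGroup Ω] [CompactSpace Ω] (f : C(Ω, ℝ)) {ε : ℝ} (hε : 0 < ε) :
    ∃ U ∈ nhds (0 : Ω), ∀ x y : Ω, y - x ∈ U → |f y - f x| < ε := by
  letI : UniformSpace Ω := IsTopologicalAddGroup.rightUniformSpace Ω
  haveI : IsUniformAddGroup Ω := isUniformAddGroup_of_addCommGroup
  haveI : CompactSpace Ω := ‹CompactSpace Ω›
  have huc : UniformContinuous f := CompactSpace.uniformContinuous_of_continuous f.continuous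
  have h1 : (fun p : Ω × Ω => (f p.1, f p.2)) ⁻¹' {q : ℝ × ℝ | dist q.1 q.2 < ε} ∈ uniformity Ω :=
    huc (Metric.dist_mem_uniformity hε)
  rw [uniformity_eq_comap_nhds_zero' Ω, Filter.mem_comap] at h1
  obtain ⟨U, hU, hsub⟩ := h1
  refine ⟨U, hU, fun x y h => ?_⟩
  have h2 : ((x, y) : Ω × Ω) ∈ (fun p : Ω × Ω => p.2 + -p.1) ⁻¹' U := by
    simpa [sub_eq_add_neg] using h
  have := hsub h2
  simpa [Real.dist_eq, abs_sub_comm] using this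

/-- In a compact totally disconnected Hausdorff additive group, every
neighborhood of `0` contains an open subgroup together with a nonzero
multiple of any given element. -/
lemma statement18_aux_sub {Ω : Type*} [TopologicalSpace Ω] [AddCommGroup Ω]
    [IsTopologicalAddGroup Ω] [CompactSpace Ω] [TotallyDisconnectedSpace Ω] [T2Space Ω]
    (α : Ω) {U : Set Ω} (hU : U ∈ nhds (0 : Ω)) :
    ∃ (K : AddSubgroup Ω) (p : ℕ), 1 ≤ p ∧ (K : Set Ω) ⊆ U ∧ (p : ℤ) • α ∈ K := by
  obtain ⟨O, hOU, hO, h0O⟩ := mem_nhds_iff.mp hU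
  obtain ⟨C, hC, h0C, hCO⟩ := compact_exists_isClopen_in_isOpen hO h0O
  obtain ⟨K, hK⟩ := IsTopologicalAddGroup.exist_openAddSubgroup_sub_clopen_nhds_of_zero hC h0C
  haveI : Finite (Ω ⧸ K.toAddSubgroup) :=
    AddSubgroup.quotient_finite_of_isOpen K.toAddSubgroup K.isOpen
  obtain ⟨m, n, hmn, heq⟩ := Finite.exists_ne_map_eq_of_infinite
    (fun n : ℕ => (QuotientAddGroup.mk ((n : ℤ) • α) : Ω ⧸ K.toAddSubgroup))
  -- WLOG m < n
  have key : ∀ m n : ℕ, m < n →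
      (QuotientAddGroup.mk ((m : ℤ) • α) : Ω ⧸ K.toAddSubgroup) = QuotientAddGroup.mk ((n : ℤ) • α) →
      ∃ (p : ℕ), 1 ≤ p ∧ (p : ℤ) • α ∈ K.toAddSubgroup := by
    intro m n hlt he
    have hmem : -((m : ℤ) • α) + (n : ℤ) • α ∈ K.toAddSubgroup := QuotientAddGroup.eq.mp he
    refine ⟨n - m, by omega, ?_⟩
    have hcast : ((n - m : ℕ) : ℤ) = (n : ℤ) - (m : ℤ) := by
      have := hlt.le; omega
    have : ((n - m : ℕ) : ℤ) • α = -((m : ℤ) • α) + (n : ℤ) • α := by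
      rw [hcast, sub_zsmul]
      abel
    rw [this]
    exact hmem
  have : ∃ (p : ℕ), 1 ≤ p ∧ (p : ℤ) • α ∈ K.toAddSubgroup := by
    rcases lt_or_gt_of_ne hmn with h | h
    · exact key m n h heq
    · exact key n m h heq.symm
  obtain ⟨p, hp1, hp⟩ := this
  exact ⟨K.toAddSubgroup, p, hp1, fun x hx => hOU (hCO (hK hx)), hp⟩

set_option maxHeartbeats 1000000 in
set_option synthInstance.maxHeartbeats 400000 in
/-- Let `Ω` be a Cantor group, `T ω = ω + α` a minimal
translation, and `f ∈ C(Ω,ℝ)`. For `ω ∈ Ω` let `V ω ∈ ℓ^∞(ℤ)` be the sequence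
`V ω (n) = f(Tⁿ ω) = f(ω + n • α)`. Then each `V ω` is limit-periodic (it lies
in the sup-norm closure of the periodic two-sided sequences), and the closure
of the shift orbit `{S^k (V ω) : k ∈ ℤ}` in `ℓ^∞(ℤ)` equals `{V ω̃ : ω̃ ∈ Ω}`. -/
theorem statement18
    (Ω : Type*) [TopologicalSpace Ω] [AddCommGroup Ω] [IsTopologicalAddGroup Ω]
    [CompactSpace Ω] [TotallyDisconnectedSpace Ω] [PerfectSpace Ω] [T2Space Ω]
    (T : Ω → Ω) (α : Ω) (hT : ∀ ω, T ω = ω + α)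
    (hMin : ∀ ω : Ω, Dense {ω' : Ω | ∃ n : ℤ, ω' = ω + n • α})
    (f : C(Ω, ℝ)) :
    ∃ V : Ω → lp (fun _ : ℤ => ℝ) ∞,
      (∀ (ω : Ω) (n : ℤ), V ω n = f (ω + n • α)) ∧
      (∀ ω : Ω, V ω ∈ closure {W : lp (fun _ : ℤ => ℝ) ∞ |
          ∃ p : ℕ, 1 ≤ p ∧ ∀ n : ℤ, W (n + p) = W n}) ∧
      (∀ ω : Ω, closure {W : lp (fun _ : ℤ => ℝ) ∞ |
          ∃ k : ℤ, ∀ n : ℤ, W n = V ω (n + k)} = Set.range V) := by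
  classical
  have hmem : ∀ g : ℤ → Ω, Memℓp (fun n => f (g n)) ∞ := by
    intro g
    apply memℓp_infty
    refine ⟨‖f‖, ?_⟩
    rintro x ⟨n, rfl⟩
    exact f.norm_coe_le_norm _
  set V : Ω → lp (fun _ : ℤ => ℝ) ∞ :=
    fun ω => ⟨fun n => f (ω + n • α), hmem _⟩ with hVdef
  have hVapp : ∀ (ω : Ω) (n : ℤ), V ω n = f (ω + n • α) := fun ω n => rfl
  -- continuity of V
  have hVc : Continuous V := by
    rw [continuous_iff_continuousAt]
    intro ω₀
    rw [ContinuousAt, Metric.tendsto_nhds]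
    intro ε hε
    obtain ⟨U, hU, hUf⟩ := statement18_aux_uc f (half_pos hε)
    have hmem2 : {ω : Ω | ω - ω₀ ∈ U} ∈ nhds ω₀ := by
      have ht : Filter.Tendsto (fun ω : Ω => ω - ω₀) (nhds ω₀) (nhds 0) := by
        have := (continuous_id.sub (continuous_const (y := ω₀))).tendsto ω₀
        rw [show (0 : Ω) = ω₀ - ω₀ from (sub_self ω₀).symm]
        exact this
      exact ht hU
    filter_upwards [hmem2] with ω hω
    rw [dist_eq_norm]
    have hb : ∀ n : ℤ, ‖(V ω - V ω₀) n‖ ≤ ε / 2 := by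
      intro n
      have h1 : (V ω - V ω₀) n = V ω n - V ω₀ n := by
        rw [lp.coeFn_sub]; rfl
      rw [h1, hVapp, hVapp, Real.norm_eq_abs]
      have harg : (ω + n • α) - (ω₀ + n • α) ∈ U := by
        have he : (ω + n • α) - (ω₀ + n • α) = ω - ω₀ := by abel
        rw [he]; exact hω
      exact le_of_lt (hUf _ _ harg)
    exact lt_of_le_of_lt (lp.norm_le_of_forall_le (by linarith) hb) (by linarith)
  refine ⟨V, hVapp, ?_, ?_⟩
  · -- limit-periodicity
    intro ω
    rw [Metric.mem_closure_iff]
    intro ε hε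
    obtain ⟨U, hU, hUf⟩ := statement18_aux_uc f (half_pos hε)
    obtain ⟨K, p, hp1, hKU, hpα⟩ := statement18_aux_sub α hU
    set W : lp (fun _ : ℤ => ℝ) ∞ :=
      ⟨fun n => f (ω + (n % (p : ℤ)) • α), hmem _⟩ with hWdef
    have hWapp : ∀ n : ℤ, W n = f (ω + (n % (p : ℤ)) • α) := fun n => rfl
    refine ⟨W, ⟨p, hp1, fun n => ?_⟩, ?_⟩
    · have hmod : (n + (p : ℤ)) % (p : ℤ) = n % (p : ℤ) := by
        conv_lhs => rw [show n + (p : ℤ) = n + (p : ℤ) * 1 by ring]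
        rw [Int.add_mul_emod_self_left]
      rw [hWapp, hWapp, hmod]
    · rw [dist_eq_norm]
      have hb : ∀ n : ℤ, ‖(V ω - W) n‖ ≤ ε / 2 := by
        intro n
        have h1 : (V ω - W) n = V ω n - W n := by
          rw [lp.coeFn_sub]; rfl
        rw [h1, hVapp, hWapp, Real.norm_eq_abs]
        have harg : (ω + n • α) - (ω + (n % (p : ℤ)) • α) ∈ U := by
          apply hKU
          have he : (ω + n • α) - (ω + (n % (p : ℤ)) • α) = (n / (p : ℤ)) • ((p : ℤ) • α) := by
            rw [← mul_zsmul]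
            have h2 : n / (p : ℤ) * (p : ℤ) = n - n % (p : ℤ) := by
              have := Int.mul_ediv_add_emod n (p : ℤ)
              linarith
            rw [h2, sub_zsmul]
            abel
          rw [he]
          exact AddSubgroup.zsmul_mem K hpα _
        exact le_of_lt (hUf _ _ harg)
      have := lp.norm_le_of_forall_le (le_of_lt (half_pos hε)) hb
      linarith
  · -- orbit closure
    intro ω
    have horb : {W : lp (fun _ : ℤ => ℝ) ∞ | ∃ k : ℤ, ∀ n : ℤ, W n = V ω (n + k)} =
        V '' {ω' : Ω | ∃ k : ℤ, ω' = ω + k • α} := by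
      ext W
      constructor
      · rintro ⟨k, hk⟩
        refine ⟨ω + k • α, ⟨k, rfl⟩, ?_⟩
        apply lp.ext
        funext n
        rw [hVapp, hk n, hVapp]
        congr 1
        rw [add_zsmul]
        abel
      · rintro ⟨ω', ⟨k, rfl⟩, rfl⟩
        refine ⟨k, fun n => ?_⟩
        rw [hVapp, hVapp]
        congr 1
        rw [add_zsmul]
        abel
    rw [horb]
    apply Set.Subset.antisymm
    · exact closure_minimal (Set.image_subset_range _ _) (isCompact_range hVc).isClosed
    · rintro _ ⟨ω', rfl⟩
      have h1 : ω' ∈ closure {ω'' : Ω | ∃ k : ℤ, ω'' = ω + k • α} := by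
        rw [(hMin ω).closure_eq]; trivial
      exact image_closure_subset_closure_image hVc ⟨ω', h1, rfl⟩
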